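/- arXiv:2402.07117 — 4 statements merged into one kernel-verified Lean document; each statement's English description precedes it below -/
import Mathlib

section
/- Let A be a real m×n matrix and b a real m-vector, and let P = {x ∈ ℝ^n : Ax = b, x ≥ 0}. Suppose P is unbounded, yet the set S₀ of points of P all of whose coordinates are nonnegative integers is finite and nonempty. Then the dimension of P (i.e., the dimension of the affine span of P) is strictly greater than the dimension of the convex hull of S₀ (i.e., the dimension of the affine span of S₀). -/
open Finset

lemma rationalize {n : ℕ} (D : Set (Fin n → ℝ))
    (hD : ∀ w ∈ D, ∃ g : Fin n → ℚ, w = fun i => (g i : ℝ))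
    (d : Fin n → ℝ) (hd : d ∈ Submodule.span ℝ D)
    (hd0 : ∀ i, 0 ≤ d i) (hdne : d ≠ 0) :
    ∃ g : Fin n → ℚ, (fun i => (g i : ℝ)) ∈ Submodule.span ℝ D ∧
      (∀ i, 0 ≤ g i) ∧ g ≠ 0 := by
  obtain ⟨k, c, f, hsum⟩ := Submodule.mem_span_set'.mp hd
  -- rational representatives of f
  have hG : ∀ j : Fin k, ∃ g : Fin n → ℚ, (f j : Fin n → ℝ) = fun i => (g i : ℝ) :=
    fun j => hD _ (f j).2
  choose G hGe using hG
  -- the ℚ-span of coefficients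
  set V : Submodule ℚ ℝ := Submodule.span ℚ (Set.range c) with hV
  haveI : FiniteDimensional ℚ V := FiniteDimensional.span_of_finite ℚ (Set.finite_range c)
  set B := Module.finBasis ℚ V with hB
  set T := Fin (Module.finrank ℚ V)
  have hcV : ∀ j, c j ∈ V := fun j => Submodule.subset_span (Set.mem_range_self j)
  set a : T → Fin k → ℚ := fun t j => B.repr ⟨c j, hcV j⟩ t with ha
  have hc : ∀ j, c j = ∑ t, (a t j : ℝ) * (B t : ℝ) := by
    intro j
    have := B.sum_repr ⟨c j, hcV j⟩
    have h2 := congrArg (Subtype.val) this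
    simp only [Submodule.coe_sum] at h2  -- maybe wrong name
    rw [← h2]
    simp [Rat.smul_def, a]
  -- rational vectors w t
  set w : T → Fin n → ℚ := fun t i => ∑ j, a t j * G j i with hw
  have hdw : ∀ i, d i = ∑ t, (B t : ℝ) * ((w t i : ℝ)) := by
    intro i
    have : d i = ∑ j, c j * (G j i : ℝ) := by
      rw [← hsum]
      simp only [Finset.sum_apply, Pi.smul_apply, smul_eq_mul]
      refine Finset.sum_congr rfl fun j _ => ?_
      rw [congrFun (hGe j) i]
    rw [this]
    have h3 : ∀ j, c j * (G j i : ℝ) = ∑ t, (B t : ℝ) * ((a t j : ℝ) * (G j i : ℝ)) := by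
      intro j; rw [hc j, Finset.sum_mul]
      exact Finset.sum_congr rfl fun t _ => by ring
    rw [Finset.sum_congr rfl fun j _ => h3 j, Finset.sum_comm]
    refine Finset.sum_congr rfl fun t _ => ?_
    rw [hw]
    push_cast
    rw [Finset.mul_sum]
  -- linear independence of B over ℚ in ℝ
  have hBli : LinearIndependent ℚ (fun t : T => (B t : ℝ)) := by
    have := B.linearIndependent
    exact this.map' V.subtype V.ker_subtype
  -- w vanishes where d vanishes
  have hwz : ∀ i, d i = 0 → ∀ t, w t i = 0 := by
    intro i hi t
    have h0 : ∑ t, (w t i) • ((B t : ℝ)) = 0 := by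
      rw [← hi, hdw i]
      refine Finset.sum_congr rfl fun t _ => ?_
      rw [Rat.smul_def]; ring
    exact Fintype.linearIndependent_iff.mp hBli _ h0 t
  -- some coordinate of d is positive
  have hI : ∃ i, 0 < d i := by
    by_contra h
    push_neg at h
    exact hdne (funext fun i => le_antisymm (h i) (hd0 i))
  set I : Finset (Fin n) := Finset.univ.filter (fun i => 0 < d i) with hIdef
  have hIne : I.Nonempty := by
    obtain ⟨i, hi⟩ := hI; exact ⟨i, by simp [hIdef, hi]⟩
  set C : Fin n → ℝ := fun i => ∑ t, |(w t i : ℝ)| with hC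
  have hCpos : ∀ i, 0 ≤ C i := fun i => Finset.sum_nonneg fun t _ => abs_nonneg _
  set δ : ℝ := I.inf' hIne (fun i => d i / (1 + C i)) with hδ
  have hdpos : ∀ i ∈ I, 0 < d i := by
    intro i hi; simpa [hIdef] using hi
  have hδpos : 0 < δ := by
    rw [hδ, Finset.lt_inf'_iff]
    intro i hi
    have h1 : 0 < d i := hdpos i hi
    have h2 : 0 < 1 + C i := by linarith [hCpos i]
    positivity
  have hδle : ∀ i ∈ I, δ * C i < d i := by
    intro i hi
    have h1 : 0 < d i := hdpos i hi
    have h2 : 0 < 1 + C i := by linarith [hCpos i]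
    have h3 : δ ≤ d i / (1 + C i) := Finset.inf'_le _ hi
    have h4 : δ * C i ≤ d i / (1 + C i) * C i :=
      mul_le_mul_of_nonneg_right h3 (hCpos i)
    have h5 : d i / (1 + C i) * C i < d i := by
      rw [div_mul_eq_mul_div, div_lt_iff₀ h2]
      nlinarith [hCpos i]
    linarith
  -- rational approximations of the basis reals
  have hρ : ∀ t : T, ∃ q : ℚ, |(B t : ℝ) - q| < δ := fun t => exists_rat_near _ hδpos
  choose ρ hρ' using hρ
  set g : Fin n → ℚ := fun i => ∑ t, ρ t * w t i with hg
  have key : ∀ i, |(g i : ℝ) - d i| ≤ δ * C i := by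
    intro i
    have e1 : (g i : ℝ) - d i = ∑ t, ((ρ t : ℝ) - (B t : ℝ)) * (w t i : ℝ) := by
      rw [hdw i, hg]
      push_cast
      rw [← Finset.sum_sub_distrib]
      exact Finset.sum_congr rfl fun t _ => by ring
    rw [e1]
    calc |∑ t, ((ρ t : ℝ) - (B t : ℝ)) * (w t i : ℝ)|
        ≤ ∑ t, |((ρ t : ℝ) - (B t : ℝ)) * (w t i : ℝ)| := Finset.abs_sum_le_sum_abs _ _
      _ ≤ ∑ t, δ * |(w t i : ℝ)| := by
          refine Finset.sum_le_sum fun t _ => ?_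
          rw [abs_mul]
          refine mul_le_mul_of_nonneg_right ?_ (abs_nonneg _)
          rw [← abs_neg]
          simpa [neg_sub] using (hρ' t).le
      _ = δ * C i := by rw [hC, Finset.mul_sum]
  have hgz : ∀ i, i ∉ I → g i = 0 := by
    intro i hi
    have hdi : d i = 0 := by
      by_contra h
      exact hi (by simp [hIdef, lt_of_le_of_ne (hd0 i) (Ne.symm h)])
    rw [hg]
    simp only
    refine Finset.sum_eq_zero fun t _ => ?_
    rw [hwz i hdi t, mul_zero]
  have hgpos : ∀ i ∈ I, 0 < (g i : ℝ) := by
    intro i hi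
    have h1 := key i
    have h2 := hδle i hi
    have := abs_le.mp h1
    linarith [this.1]
  refine ⟨g, ?_, ?_, ?_⟩
  · have e2 : (fun i => (g i : ℝ)) = ∑ t, (ρ t : ℝ) • (fun i => (w t i : ℝ)) := by
      funext i
      rw [hg]
      push_cast
      simp [Finset.sum_apply]
    rw [e2]
    refine Submodule.sum_mem _ fun t _ => Submodule.smul_mem _ _ ?_
    have e3 : (fun i => (w t i : ℝ)) = ∑ j, (a t j : ℝ) • (f j : Fin n → ℝ) := by
      funext i
      rw [hw]
      push_cast
      simp only [Finset.sum_apply, Pi.smul_apply, smul_eq_mul]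
      exact Finset.sum_congr rfl fun j _ => by rw [congrFun (hGe j) i]
    rw [e3]
    exact Submodule.sum_mem _ fun j _ =>
      Submodule.smul_mem _ _ (Submodule.subset_span (f j).2)
  · intro i
    by_cases hi : i ∈ I
    · exact_mod_cast (hgpos i hi).le
    · rw [hgz i hi]
  · obtain ⟨i, hi⟩ := hIne
    intro h
    have := hgpos i hi
    rw [h] at this
    simp at this


open Filter Topology

lemma exists_pos_dir {n : ℕ} (P : Set (Fin n → ℝ)) (W : Submodule ℝ (Fin n → ℝ))
    (x₀ : Fin n → ℝ) (hPW : ∀ x ∈ P, x - x₀ ∈ W)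
    (hPpos : ∀ x ∈ P, ∀ i, 0 ≤ x i)
    (hub : ¬ Bornology.IsBounded P) :
    ∃ d : Fin n → ℝ, d ∈ W ∧ (∀ i, 0 ≤ d i) ∧ d ≠ 0 := by
  rw [isBounded_iff_forall_norm_le] at hub
  push_neg at hub
  have hp : ∀ k : ℕ, ∃ x, x ∈ P ∧ ((k : ℝ) + ‖x₀‖ + 1) < ‖x‖ := by
    intro k
    obtain ⟨x, hx, hx2⟩ := hub ((k : ℝ) + ‖x₀‖ + 1)
    exact ⟨x, hx, by linarith⟩
  choose p hpP hpnorm using hp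
  set q : ℕ → (Fin n → ℝ) := fun k => p k - x₀ with hq
  have hqnorm : ∀ k : ℕ, (k : ℝ) + 1 ≤ ‖q k‖ := by
    intro k
    have := norm_sub_norm_le (p k) x₀
    have h2 := hpnorm k
    calc (k : ℝ) + 1 ≤ ‖p k‖ - ‖x₀‖ := by linarith
      _ ≤ ‖q k‖ := this
  have hqpos : ∀ k, (0 : ℝ) < ‖q k‖ := fun k => lt_of_lt_of_le (by positivity) (hqnorm k)
  set u : ℕ → (Fin n → ℝ) := fun k => ‖q k‖⁻¹ • q k with hu
  have husphere : ∀ k, u k ∈ Metric.sphere (0 : Fin n → ℝ) 1 := by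
    intro k
    rw [mem_sphere_zero_iff_norm, hu]
    simp only [norm_smul, norm_inv, norm_norm]
    rw [inv_mul_cancel₀ (ne_of_gt (hqpos k))]
  obtain ⟨d, hdsphere, φ, hφ, hconv⟩ :=
    (isCompact_sphere (0 : Fin n → ℝ) 1).tendsto_subseq husphere
  have hdW : d ∈ W := by
    have hclosed : IsClosed (W : Set (Fin n → ℝ)) := W.closed_of_finiteDimensional
    refine hclosed.mem_of_tendsto hconv (Eventually.of_forall fun k => ?_)
    exact W.smul_mem _ (hPW _ (hpP (φ k)))
  have hφle : ∀ k : ℕ, (k : ℝ) ≤ (φ k : ℝ) := fun k => by exact_mod_cast hφ.le_apply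
  refine ⟨d, hdW, ?_, ?_⟩
  · intro i
    have hconv_i : Tendsto (fun k => u (φ k) i) atTop (𝓝 (d i)) := by
      have := hconv
      rw [tendsto_pi_nhds] at this
      exact this i
    have hL : Tendsto (fun k : ℕ => -‖x₀‖ / ((k : ℝ) + 1)) atTop (𝓝 0) := by
      apply Tendsto.div_atTop tendsto_const_nhds
      exact tendsto_atTop_add_const_right _ _ tendsto_natCast_atTop_atTop
    have hLφ : Tendsto (fun k : ℕ => -‖x₀‖ / ((φ k : ℝ) + 1)) atTop (𝓝 0) :=
      hL.comp hφ.tendsto_atTop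
    refine le_of_tendsto_of_tendsto hLφ hconv_i (Eventually.of_forall fun k => ?_)
    show -‖x₀‖ / ((φ k : ℝ) + 1) ≤ u (φ k) i
    set j := φ k with hj
    have h1 : 0 ≤ p j i := hPpos _ (hpP j) i
    have h2 : x₀ i ≤ ‖x₀‖ := by
      calc x₀ i ≤ |x₀ i| := le_abs_self _
        _ = ‖x₀ i‖ := rfl
        _ ≤ ‖x₀‖ := norm_le_pi_norm x₀ i
    have h3 : u j i = ‖q j‖⁻¹ * (p j i - x₀ i) := rfl
    have h4 : (0:ℝ) < ‖q j‖ := hqpos j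
    have h5 : (j : ℝ) + 1 ≤ ‖q j‖ := hqnorm j
    have hjpos : (0:ℝ) < (j : ℝ) + 1 := by positivity
    have h10 : ‖q j‖⁻¹ ≤ ((j:ℝ)+1)⁻¹ := by
      exact inv_anti₀ hjpos h5
    have hx0 : (0:ℝ) ≤ ‖x₀‖ := norm_nonneg _
    rw [h3]
    calc -‖x₀‖ / ((j:ℝ)+1) = ((j:ℝ)+1)⁻¹ * (-‖x₀‖) := by
          rw [div_eq_inv_mul]
      _ ≤ ‖q j‖⁻¹ * (-‖x₀‖) := by
          apply mul_le_mul_of_nonpos_right h10 (by linarith)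
      _ ≤ ‖q j‖⁻¹ * (p j i - x₀ i) := by
          apply mul_le_mul_of_nonneg_left _ (by positivity)
          linarith
  · intro h
    rw [h] at hdsphere
    simp at hdsphere


lemma nat_scale {n : ℕ} (g : Fin n → ℚ) (h0 : ∀ i, 0 ≤ g i) :
    ∃ N : ℕ, 0 < N ∧ ∀ i, ∃ z : ℕ, (N : ℚ) * g i = (z : ℚ) := by
  refine ⟨∏ j, (g j).den, Finset.prod_pos fun j _ => (g j).pos, ?_⟩
  intro i
  obtain ⟨M, hM⟩ : (g i).den ∣ ∏ j, (g j).den :=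
    Finset.dvd_prod_of_mem _ (Finset.mem_univ i)
  have hnum : (0:ℤ) ≤ (g i).num := Rat.num_nonneg.mpr (h0 i)
  refine ⟨M * (g i).num.toNat, ?_⟩
  have he : ((∏ j, (g j).den : ℕ) : ℚ) * g i = (M : ℚ) * ((g i).num : ℚ) := by
    rw [hM]
    push_cast
    rw [mul_comm ((g i).den : ℚ) (M : ℚ), mul_assoc, mul_comm ((g i).den : ℚ), Rat.mul_den_eq_num]
  rw [he]
  have : ((g i).num.toNat : ℚ) = ((g i).num : ℚ) := by
    exact_mod_cast Int.toNat_of_nonneg hnum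
  rw [Nat.cast_mul, this]

/-- Byrd–Goldman–Heller: if the LP feasible region `P = {x : Ax = b, x ≥ 0}` is
unbounded but its set of nonnegative-integer points is finite and nonempty, then
the dimension of `P` (dimension of its affine span) strictly exceeds the
dimension of the convex hull of the integer points. -/
theorem byrd_goldman_heller_dimension
    (m n : ℕ) (A : Matrix (Fin m) (Fin n) ℝ) (b : Fin m → ℝ)
    (P : Set (Fin n → ℝ))
    (hP : P = {x : Fin n → ℝ | A.mulVec x = b ∧ ∀ i, 0 ≤ x i})
    (S : Set (Fin n → ℝ))
    (hS : S = {x ∈ P | ∀ i, ∃ z : ℕ, x i = (z : ℝ)})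
    (hub : ¬ Bornology.IsBounded P)
    (hfin : S.Finite) (hne : S.Nonempty) :
    Module.finrank ℝ (affineSpan ℝ (convexHull ℝ S)).direction
      < Module.finrank ℝ (affineSpan ℝ P).direction := by
  by_contra hcon
  push_neg at hcon
  rw [affineSpan_convexHull] at hcon
  obtain ⟨x₀, hx₀S⟩ := hne
  have hSP : S ⊆ P := by rw [hS]; exact fun x hx => hx.1
  have hx₀P : x₀ ∈ P := hSP hx₀S
  have hint : ∀ x ∈ S, ∀ i, ∃ z : ℕ, x i = (z : ℝ) := by
    rw [hS]; exact fun x hx => hx.2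
  have hPpos : ∀ x ∈ P, ∀ i, 0 ≤ x i := by
    rw [hP]; exact fun x hx => hx.2
  have hPAx : ∀ x ∈ P, A.mulVec x = b := by
    rw [hP]; exact fun x hx => hx.1
  have hle : affineSpan ℝ S ≤ affineSpan ℝ P := affineSpan_mono ℝ hSP
  have hdirle : (affineSpan ℝ S).direction ≤ (affineSpan ℝ P).direction :=
    AffineSubspace.direction_le hle
  have hdireq : (affineSpan ℝ S).direction = (affineSpan ℝ P).direction :=
    Submodule.eq_of_le_of_finrank_le hdirle hcon
  have hspaneq : affineSpan ℝ S = affineSpan ℝ P :=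
    AffineSubspace.ext_of_direction_eq hdireq
      ⟨x₀, subset_affineSpan ℝ S hx₀S, subset_affineSpan ℝ P hx₀P⟩
  -- every point of the affine span of P satisfies A x = b
  have hAx : ∀ x ∈ affineSpan ℝ P, A.mulVec x = b := by
    intro x hx
    have hP' : P ⊆ (AffineSubspace.comap (A.mulVecLin.toAffineMap)
        (affineSpan ℝ ({b} : Set (Fin m → ℝ))) : Set (Fin n → ℝ)) := by
      intro y hy
      show A.mulVecLin y ∈ affineSpan ℝ ({b} : Set (Fin m → ℝ))
      rw [AffineSubspace.mem_affineSpan_singleton]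
      exact hPAx y hy
    have h2 := (affineSpan_le.mpr hP') hx
    have h3 : A.mulVecLin x ∈ affineSpan ℝ ({b} : Set (Fin m → ℝ)) := h2
    rw [AffineSubspace.mem_affineSpan_singleton] at h3
    exact h3
  set W := (affineSpan ℝ P).direction with hW
  have hmemW : ∀ x ∈ P, x - x₀ ∈ W := by
    intro x hx
    have := AffineSubspace.vsub_mem_direction
      (subset_affineSpan ℝ P hx) (subset_affineSpan ℝ P hx₀P)
    exact this
  set D : Set (Fin n → ℝ) := (fun x => x -ᵥ x₀) '' S with hD
  have hWD : W = Submodule.span ℝ D := by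
    rw [hW, ← hspaneq, direction_affineSpan, vectorSpan_eq_span_vsub_set_right ℝ hx₀S]
  have hDrat : ∀ w ∈ D, ∃ g : Fin n → ℚ, w = fun i => (g i : ℝ) := by
    rintro w ⟨s, hsS, rfl⟩
    choose zs hzs using hint s hsS
    choose z0 hz0 using hint x₀ hx₀S
    refine ⟨fun i => (zs i : ℚ) - (z0 i : ℚ), funext fun i => ?_⟩
    show s i - x₀ i = _
    rw [hzs i, hz0 i]
    push_cast
    ring
  obtain ⟨d, hdW, hd0, hdne⟩ := exists_pos_dir P W x₀ hmemW hPpos hub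
  obtain ⟨g, hgW, hg0, hgne⟩ := rationalize D hDrat d (hWD ▸ hdW) hd0 hdne
  obtain ⟨N, hNpos, hNz⟩ := nat_scale g hg0
  choose z hz using hNz
  choose z₀ hz₀ using hint x₀ hx₀S
  set v : Fin n → ℝ := fun i => (z i : ℝ) with hv
  have hvW : v ∈ W := by
    have h1 : v = (N : ℝ) • (fun i => (g i : ℝ)) := by
      funext i
      show ((z i : ℝ)) = (N : ℝ) * (g i : ℝ)
      have h2 := congrArg (fun q : ℚ => (q : ℝ)) (hz i)
      push_cast at h2
      exact h2.symm
    rw [h1, hWD]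
    exact Submodule.smul_mem _ _ hgW
  obtain ⟨i₀, hi₀⟩ : ∃ i, 1 ≤ z i := by
    obtain ⟨i, hi⟩ := Function.ne_iff.mp hgne
    have hgi : 0 < g i := lt_of_le_of_ne (hg0 i) (Ne.symm hi)
    have h1 : 0 < (N : ℚ) * g i := by positivity
    rw [hz i] at h1
    exact ⟨i, by exact_mod_cast h1⟩
  set F : ℕ → (Fin n → ℝ) := fun k => x₀ + (k : ℝ) • v with hF
  have hFspan : ∀ k, F k ∈ affineSpan ℝ P := by
    intro k
    have : F k = ((k : ℝ) • v) +ᵥ x₀ := by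
      funext i; simp [hF]; ring
    rw [this]
    exact AffineSubspace.vadd_mem_of_mem_direction
      (W.smul_mem _ hvW) (subset_affineSpan ℝ P hx₀P)
  have hFS : ∀ k, F k ∈ S := by
    intro k
    rw [hS]
    have hcoord : ∀ i, F k i = ((z₀ i + k * z i : ℕ) : ℝ) := by
      intro i
      show x₀ i + (k : ℝ) * v i = _
      rw [hz₀ i, hv]
      push_cast
      ring
    refine ⟨?_, fun i => ⟨z₀ i + k * z i, hcoord i⟩⟩
    rw [hP]
    refine ⟨hAx _ (hFspan k), fun i => ?_⟩
    rw [hcoord i]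
    positivity
  have hFinj : Function.Injective F := by
    intro k l hkl
    have h1 := congrFun hkl i₀
    have h2 : x₀ i₀ + (k : ℝ) * v i₀ = x₀ i₀ + (l : ℝ) * v i₀ := h1
    have h3 : (0:ℝ) < v i₀ := by
      have h5 : (0:ℝ) < (z i₀ : ℝ) := by exact_mod_cast hi₀
      simpa [hv] using h5
    have h4 : (k : ℝ) = (l : ℝ) := by
      have := mul_right_cancel₀ (ne_of_gt h3) (by linarith : (k:ℝ) * v i₀ = (l:ℝ) * v i₀)
      exact this
    exact_mod_cast h4
  exact hfin.not_infinite (Set.infinite_of_injective_forall_mem hFinj hFS)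
end

section
/- Let p₁, …, p_m be distinct prime numbers and q₁, …, q_m integers with q_i ≥ 2. Every element of the subfield of ℝ generated by ℚ together with the positive real roots p₁^{1/q₁}, …, p_m^{1/q_m} can be written uniquely in the form ∑ d_{k₁…k_m} ∏_{i=1}^{m} (p_i^{1/q_i})^{k_i}, where the sum runs over all multi-indices (k₁, …, k_m) with 0 ≤ k_i ≤ q_i − 1 and every coefficient d_{k₁…k_m} is rational. In particular, these monomials form a ℚ-vector-space basis of that subfield. -/
open Polynomial IntermediateField

theorem norm_pow_eq {K : Type} [Field K] {e ℓ : ℕ} (he0 : 0 < e) {c : K} {E : Type} [Field E]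
    [Algebra K E] {z : E} (hz : minpoly K z = X ^ e - C c) (b : K⟮z⟯)
    (hb : b ^ ℓ = AdjoinSimple.gen K z) :
    (Algebra.norm K b) ^ ℓ = (-1) ^ e * (-c) := by
  have hzint : IsIntegral K z := not_not.mp fun h ↦ by
    simpa only [degree_zero, degree_X_pow_sub_C he0,
      WithBot.natCast_ne_bot] using congr_arg degree (hz.symm.trans (minpoly.eq_zero h))
  have hdim : (IntermediateField.adjoin.powerBasis hzint).dim = e := by
    rw [IntermediateField.adjoin.powerBasis_dim, hz, natDegree_X_pow_sub_C]
  rw [← map_pow, hb, ← IntermediateField.adjoin.powerBasis_gen hzint,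
    Algebra.PowerBasis.norm_gen_eq_coeff_zero_minpoly,
    IntermediateField.adjoin.powerBasis_gen, IntermediateField.minpoly_gen, hz, hdim]
  congr 1
  simp [coeff_X_pow, he0.ne]

theorem irr_aux : ∀ (d : ℕ), 0 < d → ∀ (γ : ℝ), 0 < γ → ∀ c : ℚ, γ ^ d = (c : ℝ) →
    (∀ k : ℕ, 0 < k → k < d → ∀ r : ℚ, γ ^ k ≠ (r : ℝ)) →
    Irreducible (X ^ d - C c) := by
  intro d
  induction d using Nat.strong_induction_on with
  | _ d IH =>
  intro hd γ hγ c hc hmin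
  by_cases hd1 : d = 1
  · subst hd1
    simpa using irreducible_X_sub_C c
  · have hcpos : 0 < c := by
      have : (0:ℝ) < (c:ℝ) := hc ▸ pow_pos hγ d
      exact_mod_cast this
    set ℓ := d.minFac with hℓ
    have hℓp : ℓ.Prime := Nat.minFac_prime hd1
    obtain ⟨e, he⟩ : ℓ ∣ d := Nat.minFac_dvd d
    have he0 : 0 < e := Nat.pos_of_ne_zero (by rintro rfl; rw [mul_zero] at he; omega)
    have helt : e < d := by nlinarith [hℓp.two_le, he0]
    set δ := γ ^ ℓ with hδ
    have hδpos : 0 < δ := pow_pos hγ ℓ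
    have hδe : δ ^ e = (c : ℝ) := by rw [hδ, ← pow_mul, ← he, hc]
    have hδmin : ∀ k : ℕ, 0 < k → k < e → ∀ r : ℚ, δ ^ k ≠ (r : ℝ) := by
      intro k hk hke r hr
      rw [hδ, ← pow_mul] at hr
      refine hmin (ℓ * k) (Nat.mul_pos hℓp.pos hk) ?_ r hr
      rw [he]
      exact mul_lt_mul_of_pos_left hke hℓp.pos
    have hirr_e : Irreducible (X ^ e - C c) := IH e helt he0 δ hδpos c hδe hδmin
    have key : ∀ (E : Type) [Field E] [Algebra ℚ E] (z : E),
        minpoly ℚ z = X ^ e - C c →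
        Irreducible (X ^ ℓ - C (AdjoinSimple.gen ℚ z)) := by
      intro E _ _ z hz
      apply X_pow_sub_C_irreducible_of_prime hℓp
      intro b hb
      obtain ⟨r, hnorm⟩ : ∃ r : ℚ, r ^ ℓ = (-1) ^ e * (-c) := ⟨_, norm_pow_eq he0 hz b hb⟩
      have hs : ∃ s : ℚ, s ^ ℓ = c := by
        rcases Nat.even_or_odd e with heven | hodd
        · rw [heven.neg_one_pow] at hnorm
          rcases hℓp.eq_two_or_odd' with h2 | hodd
          · exfalso
            rw [h2] at hnorm
            nlinarith [sq_nonneg r]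
          · exact ⟨-r, by rw [hodd.neg_pow, hnorm]; ring⟩
        · exact ⟨r, by rw [hodd.neg_one_pow] at hnorm; rw [hnorm]; ring⟩
      obtain ⟨s, hs⟩ := hs
      have habs : |s| ^ ℓ = c := by
        rw [← abs_pow, hs, abs_of_pos hcpos]
      have : γ ^ e = ((|s| : ℚ) : ℝ) := by
        refine (pow_left_inj₀ (by positivity) (by positivity) hℓp.ne_zero).mp ?_
        rw [← pow_mul, mul_comm e ℓ, ← he, hc, ← Rat.cast_pow, habs]
      exact hmin e he0 helt |s| this
    rw [he]
    exact X_pow_mul_sub_C_irreducible hirr_e key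


theorem trace_aux (L : IntermediateField ℚ ℝ) [FiniteDimensional ℚ L] (β : L)
    (hβ : 0 < (β : ℝ)) (N : ℕ) (hN : 0 < N) (c : ℚ) (hc : (β : ℝ) ^ N = (c : ℝ))
    (hirr : ∀ r : ℚ, (β : ℝ) ≠ (r : ℝ)) : Algebra.trace ℚ L β = 0 := by
  classical
  set γ : ℝ := (β : ℝ) with hγ
  have hex : ∃ k, 0 < k ∧ ∃ r : ℚ, γ ^ k = (r : ℝ) := ⟨N, hN, c, hc⟩
  set d := Nat.find hex with hd
  obtain ⟨hd0, c', hc'⟩ := Nat.find_spec hex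
  rw [← hd] at hd0 hc'
  have hmin : ∀ k : ℕ, 0 < k → k < d → ∀ r : ℚ, γ ^ k ≠ (r : ℝ) := by
    intro k hk hkd r hr
    exact Nat.find_min hex hkd ⟨hk, r, hr⟩
  have hd1 : d ≠ 1 := by
    intro h
    rw [h, pow_one] at hc'
    exact hirr c' hc'
  have hd2 : 2 ≤ d := by omega
  have hirrd : Irreducible (X ^ d - C c') := irr_aux d hd0 γ hβ c' hc' hmin
  have hmono : (X ^ d - C c').Monic := monic_X_pow_sub_C _ hd0.ne'
  have hminpoly : minpoly ℚ γ = X ^ d - C c' := by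
    refine (minpoly.eq_of_irreducible_of_monic hirrd ?_ hmono).symm
    simp [hc']
  have hminpolyβ : minpoly ℚ β = X ^ d - C c' := by
    rw [← hminpoly]
    exact (minpoly.algebraMap_eq (algebraMap L ℝ).injective β).symm
  have hint : IsIntegral ℚ β := IsIntegral.of_finite ℚ β
  rw [trace_eq_trace_adjoin ℚ β, ← IntermediateField.adjoin.powerBasis_gen hint,
    PowerBasis.trace_gen_eq_nextCoeff_minpoly, IntermediateField.adjoin.powerBasis_gen,
    IntermediateField.minpoly_gen, hminpolyβ,
    nextCoeff_of_natDegree_pos (by rw [natDegree_X_pow_sub_C]; omega)]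
  rw [natDegree_X_pow_sub_C]
  simp [coeff_X_pow, coeff_C, show ¬ (d-1 = d) by omega, show ¬ (d - 1 = 0) by omega]

/-- Every element of the subfield of `ℝ` generated by `ℚ` together with the
positive real roots `p i ^ (1 / q i)` (the `p i` distinct primes, `q i ≥ 2`)
can be written uniquely as a rational linear combination of the monomials
`∏ i, (p i ^ (1 / q i)) ^ k i` with `0 ≤ k i ≤ q i - 1`; in particular these
monomials form a `ℚ`-basis of that subfield. -/
theorem mem_subfield_prime_roots_unique_repr
    (m : ℕ) (p q : Fin m → ℕ)
    (hp : ∀ i, (p i).Prime) (hpdist : Function.Injective p)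
    (hq : ∀ i, 2 ≤ q i)
    (x : Fin m → ℝ) (hxpos : ∀ i, 0 < x i)
    (hroot : ∀ i, x i ^ q i = ((p i : ℕ) : ℝ)) :
    ∀ z : ℝ, z ∈ Subfield.closure (Set.range x) →
      ∃! d : (Π i, Fin (q i)) → ℚ,
        z = ∑ k : (Π i, Fin (q i)), (d k : ℝ) * ∏ i, x i ^ (k i : ℕ) := by
  classical
  have hq0 : ∀ i, 0 < q i := fun i => lt_of_lt_of_le two_pos (hq i)
  set M : (Π i, Fin (q i)) → ℝ := fun k => ∏ i, x i ^ (k i : ℕ) with hM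
  have hMpos : ∀ k, 0 < M k := fun k => Finset.prod_pos fun i _ => pow_pos (hxpos i) _
  have hxint : ∀ i, IsIntegral ℚ (x i) := by
    intro i
    refine ⟨X ^ (q i) - C ((p i : ℚ)), monic_X_pow_sub_C _ (hq0 i).ne', ?_⟩
    simp [hroot i]
  set L : IntermediateField ℚ ℝ := IntermediateField.adjoin ℚ (Set.range x) with hL
  haveI : Finite (Set.range x) := (Set.finite_range x).to_subtype
  haveI hFD : FiniteDimensional ℚ L :=
    IntermediateField.finiteDimensional_adjoin (fun r hr => by
      obtain ⟨i, rfl⟩ := hr; exact hxint i)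
  have hxL : ∀ i, x i ∈ L := fun i => IntermediateField.subset_adjoin ℚ _ ⟨i, rfl⟩
  set ML : (Π i, Fin (q i)) → L := fun k => ∏ i, (⟨x i, hxL i⟩ : L) ^ (k i : ℕ) with hML
  have hMLcoe : ∀ k, ((ML k : L) : ℝ) = M k := by
    intro k
    rw [hML, hM]
    push_cast
    rfl
  -- numbers
  set N : ℕ := ∏ i, q i with hN
  have hN0 : 0 < N := Finset.prod_pos fun i _ => hq0 i
  set Ni : Fin m → ℕ := fun i => ∏ j ∈ Finset.univ.erase i, q j with hNi
  have hNi0 : ∀ i, 0 < Ni i := fun i => Finset.prod_pos fun j _ => hq0 j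
  have hqNi : ∀ i, q i * Ni i = N := fun i => Finset.mul_prod_erase _ _ (Finset.mem_univ i)
  set AN : (Π i, Fin (q i)) → ℕ := fun k => ∏ i, p i ^ ((k i : ℕ) * Ni i) with hAN
  have hAN0 : ∀ k, AN k ≠ 0 := fun k => (Finset.prod_pos fun i _ => pow_pos (hp i).pos _).ne'
  have hMN : ∀ k, (M k) ^ N = ((AN k : ℕ) : ℝ) := by
    intro k
    rw [hM, hAN, ← Finset.prod_pow]
    push_cast
    refine Finset.prod_congr rfl fun i _ => ?_
    rw [← pow_mul, show (k i : ℕ) * N = q i * ((k i : ℕ) * Ni i) by rw [← hqNi i]; ring,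
      pow_mul, hroot i]
  have hfact : ∀ (k : Π i, Fin (q i)) (i : Fin m),
      (AN k).factorization (p i) = (k i : ℕ) * Ni i := by
    intro k i
    rw [hAN, Nat.factorization_prod (fun j _ => (pow_pos (hp j).pos _).ne')]
    rw [Finsupp.finset_sum_apply]
    rw [Finset.sum_eq_single i ?_ ?_]
    · rw [Nat.factorization_pow, Finsupp.smul_apply, (hp i).factorization,
        Finsupp.single_eq_same, smul_eq_mul, mul_one]
    · intro j _ hj
      rw [Nat.factorization_pow, Finsupp.smul_apply, (hp j).factorization,
        Finsupp.single_apply, if_neg (fun h => hj (hpdist h)), smul_zero]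
    · intro h
      exact absurd (Finset.mem_univ i) h
  -- linear independence
  have indep : ∀ c : (Π i, Fin (q i)) → ℚ, ∑ k, (c k : ℝ) * M k = 0 → ∀ k₀, c k₀ = 0 := by
    intro c hrel k₀
    have hML0 : ML k₀ ≠ 0 := by
      intro h
      have h2 := hMLcoe k₀
      rw [h] at h2
      exact (hMpos k₀).ne (by simpa using h2)
    set β : (Π i, Fin (q i)) → L := fun k => ML k * (ML k₀)⁻¹ with hβ
    have hβcoe : ∀ k, ((β k : L) : ℝ) = M k * (M k₀)⁻¹ := by
      intro k
      rw [hβ]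
      simp only [MulMemClass.coe_mul, IntermediateField.coe_inv, hMLcoe]
    have hS : (∑ k, c k • β k) = 0 := by
      have hco : ((∑ k, c k • β k : L) : ℝ) = 0 := by
        push_cast
        simp only [Rat.smul_def, hβcoe, ← mul_assoc]
        rw [← Finset.sum_mul, hrel, zero_mul]
      exact_mod_cast hco
    have htr := congrArg (Algebra.trace ℚ L) hS
    rw [map_sum, map_zero] at htr
    have hterm : ∀ k, Algebra.trace ℚ L (c k • β k) = c k * Algebra.trace ℚ L (β k) :=
      fun k => by rw [LinearMap.map_smul, smul_eq_mul]
    rw [Finset.sum_congr rfl (fun k _ => hterm k)] at htr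
    have hzero : ∀ k ∈ Finset.univ, k ≠ k₀ → c k * Algebra.trace ℚ L (β k) = 0 := by
      intro k _ hk
      have htr0 : Algebra.trace ℚ L (β k) = 0 := by
        refine trace_aux L (β k) ?_ N hN0 ((AN k : ℚ) / (AN k₀ : ℚ)) ?_ ?_
        · rw [hβcoe k]
          have := hMpos k; have := hMpos k₀; positivity
        · rw [hβcoe k, mul_pow, inv_pow, hMN k, hMN k₀]
          push_cast
          rw [div_eq_mul_inv]
        · intro r hr
          rw [hβcoe k] at hr
          have hrpos : (0:ℚ) < r := by
            have : (0:ℝ) < (r:ℝ) := by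
              rw [← hr]
              have := hMpos k; have := hMpos k₀; positivity
            exact_mod_cast this
          have hMk : M k = (r:ℝ) * M k₀ := by
            rw [← hr, mul_assoc, inv_mul_cancel₀ (hMpos k₀).ne', mul_one]
          have hANq : (AN k : ℚ) = r ^ N * AN k₀ := by
            have hAN_eq : ((AN k : ℕ) : ℝ) = (r:ℝ) ^ N * ((AN k₀ : ℕ) : ℝ) := by
              rw [← hMN k, hMk, mul_pow, hMN k₀]
            exact_mod_cast hAN_eq
          set a : ℕ := r.num.toNat with hadef
          set b : ℕ := r.den with hbdef
          have hb0 : b ≠ 0 := r.den_nz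
          have ha0 : a ≠ 0 := by
            have h1 : 0 < r.num := Rat.num_pos.mpr hrpos
            have h2 : a = r.num.toNat := hadef
            omega
          have haq : (a : ℚ) = r * b := by
            have hden : ((r.den : ℚ)) ≠ 0 := by exact_mod_cast r.den_nz
            have h3 : r * (r.den : ℚ) = (r.num : ℚ) := by
              nth_rewrite 1 [← Rat.num_div_den r]
              exact div_mul_cancel₀ _ hden
            rw [hbdef, h3, hadef]
            exact_mod_cast congrArg (fun z : ℤ => (z : ℚ))
              (Int.toNat_of_nonneg (Rat.num_pos.mpr hrpos).le)
          have hNat : AN k * b ^ N = a ^ N * AN k₀ := by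
            have hcast : ((AN k * b ^ N : ℕ) : ℚ) = ((a ^ N * AN k₀ : ℕ) : ℚ) := by
              push_cast
              rw [hANq, haq]
              ring
            exact_mod_cast hcast
          apply hk
          funext i
          refine Fin.ext ?_
          have heq := congrArg (fun n => n.factorization (p i)) hNat
          simp only [Nat.factorization_mul (hAN0 k) (pow_ne_zero _ hb0),
            Nat.factorization_mul (pow_ne_zero _ ha0) (hAN0 k₀),
            Finsupp.add_apply, Nat.factorization_pow, Finsupp.smul_apply,
            hfact k i, hfact k₀ i, smul_eq_mul] at heq
          -- heq : k i * Ni i + N * vb = N * va + k₀ i * Ni i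
          set va := a.factorization (p i) with hva
          set vb := b.factorization (p i) with hvb
          rw [← hqNi i] at heq
          have h2 : (k i : ℕ) + q i * vb = q i * va + (k₀ i : ℕ) := by
            refine Nat.eq_of_mul_eq_mul_right (hNi0 i) ?_
            ring_nf
            ring_nf at heq
            linarith
          have hklt : (k i : ℕ) < q i := (k i).isLt
          have hk0lt : (k₀ i : ℕ) < q i := (k₀ i).isLt
          rcases lt_trichotomy va vb with h | h | h
          · exfalso
            have hx : q i * va + q i ≤ q i * vb := by
              have := Nat.mul_le_mul_left (q i) (Nat.succ_le_of_lt h)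
              simpa [Nat.mul_succ] using this
            linarith
          · rw [h] at h2
            linarith
          · exfalso
            have hx : q i * vb + q i ≤ q i * va := by
              have := Nat.mul_le_mul_left (q i) (Nat.succ_le_of_lt h)
              simpa [Nat.mul_succ] using this
            linarith
      rw [htr0, mul_zero]
    rw [Finset.sum_eq_single_of_mem k₀ (Finset.mem_univ k₀) hzero] at htr
    have hβk₀ : β k₀ = 1 := mul_inv_cancel₀ hML0
    rw [hβk₀] at htr
    have hone : Algebra.trace ℚ L (1 : L) = (Module.finrank ℚ L : ℚ) := by
      have h1 := Algebra.trace_algebraMap (R := ℚ) (S := L) 1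
      simpa using h1
    rw [hone] at htr
    have hfr : ((Module.finrank ℚ L : ℚ)) ≠ 0 := by
      have : 0 < Module.finrank ℚ L := Module.finrank_pos
      exact_mod_cast this.ne'
    exact (mul_eq_zero.mp htr).resolve_right hfr
  -- spanning
  have hq1 : ∀ i, 1 < q i := fun i => lt_of_lt_of_le one_lt_two (hq i)
  have hred : ∀ i (a : ℕ), x i ^ a = (p i : ℝ) ^ (a / q i) * x i ^ (a % q i) := by
    intro i a
    conv_lhs => rw [← Nat.div_add_mod a (q i)]
    rw [pow_add, pow_mul, hroot i]
  set V : Submodule ℚ ℝ := Submodule.span ℚ (Set.range M) with hV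
  have hgen : ∀ k k', M k * M k' ∈ V := by
    intro k k'
    have hmulM : M k * M k' = ((∏ i, (p i : ℚ) ^ (((k i : ℕ) + (k' i : ℕ)) / q i) : ℚ) : ℝ)
        * M (fun i => ⟨((k i : ℕ) + (k' i : ℕ)) % q i, Nat.mod_lt _ (hq0 i)⟩) := by
      rw [hM]
      push_cast
      rw [← Finset.prod_mul_distrib, ← Finset.prod_mul_distrib]
      refine Finset.prod_congr rfl fun i _ => ?_
      rw [← pow_add]
      exact hred i _
    rw [hmulM, ← Rat.smul_def]
    exact V.smul_mem _ (Submodule.subset_span ⟨_, rfl⟩)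
  have h1V : (1:ℝ) ∈ V := by
    have h1 : M (fun i => ⟨0, hq0 i⟩) = 1 := by simp [hM]
    exact h1 ▸ Submodule.subset_span ⟨_, rfl⟩
  have hVV : ∀ a b : ℝ, a ∈ V → b ∈ V → a * b ∈ V := by
    intro a b ha hb
    have hle : V * V ≤ V := by
      rw [hV, Submodule.span_mul_span, Submodule.span_le]
      rintro y ⟨s, ⟨k, rfl⟩, t, ⟨k', rfl⟩, rfl⟩
      exact hgen k k'
    exact hle (Submodule.mul_mem_mul ha hb)
  set SA : Subalgebra ℚ ℝ := V.toSubalgebra h1V hVV with hSA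
  have hxV : ∀ i, x i ∈ SA := by
    intro i
    have hδ : M (fun j => if j = i then (⟨1, hq1 j⟩ : Fin (q j)) else ⟨0, hq0 j⟩) = x i := by
      rw [hM]
      beta_reduce
      rw [Finset.prod_eq_single i ?_ ?_]
      · simp
      · intro j _ hj
        simp [hj]
      · intro h
        exact absurd (Finset.mem_univ i) h
    exact hδ ▸ Submodule.subset_span ⟨_, rfl⟩
  intro z hz
  have hzL : z ∈ L := by
    have hle : Subfield.closure (Set.range x) ≤ L.toSubfield := by
      rw [Subfield.closure_le]
      rintro _ ⟨i, rfl⟩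
      exact hxL i
    exact hle hz
  have hzV : z ∈ V := by
    have h1 : z ∈ L.toSubalgebra := hzL
    rw [hL, IntermediateField.adjoin_toSubalgebra_of_isAlgebraic
      (fun r hr => by obtain ⟨i, rfl⟩ := hr; exact (hxint i).isAlgebraic)] at h1
    have h2 : Algebra.adjoin ℚ (Set.range x) ≤ SA := Algebra.adjoin_le (fun r hr => by
      obtain ⟨i, rfl⟩ := hr; exact hxV i)
    exact h2 h1
  obtain ⟨d, hd⟩ := (Submodule.mem_span_range_iff_exists_fun (R := ℚ)).mp hzV
  refine ⟨d, ?_, ?_⟩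
  · rw [← hd]
    exact (Finset.sum_congr rfl fun k _ => (Rat.smul_def _ _)).symm
  · intro d' hd'
    funext k₀
    have hdiff : ∑ k, ((d' k - d k : ℚ) : ℝ) * M k = 0 := by
      push_cast
      simp only [sub_mul]
      rw [Finset.sum_sub_distrib]
      have h1 : ∑ k, (d k : ℝ) * M k = z := by
        rw [← hd]
        exact Finset.sum_congr rfl fun k _ => (Rat.smul_def _ _).symm
      rw [h1, ← hd']
      ring
    have h0 := indep _ hdiff k₀
    have : d' k₀ - d k₀ = 0 := h0
    linarith
end

section
/- Let p₁, …, p_m be distinct prime numbers and q₁, …, q_m integers with q_i ≥ 2. For each multi-index k = (k₁, …, k_m) with 0 ≤ k_i ≤ q_i − 1, let d_k^1, …, d_k^n and d_k^b be rational numbers, and define real numbers a_j = ∑_k d_k^j ∏_{i=1}^{m} (p_i^{1/q_i})^{k_i} for j = 1, …, n and b = ∑_k d_k^b ∏_{i=1}^{m} (p_i^{1/q_i})^{k_i}. Then for every integer vector x ∈ ℤ^n, the single equation ∑_{j=1}^{n} a_j x_j = b holds if and only if for every multi-index k the rational equation ∑_{j=1}^{n} d_k^j x_j = d_k^b holds.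 -/
open Polynomial IntermediateField

namespace RadicalAux

/-- `y ^ n` is rational. -/
def RatPow (y : ℝ) (n : ℕ) : Prop := ∃ c : ℚ, y ^ n = (c : ℝ)

lemma ratPow_gcd {y : ℝ} (hy : 0 < y) {a b : ℕ} (ha : RatPow y a) (hb : RatPow y b) :
    RatPow y (Nat.gcd a b) := by
  obtain ⟨c, hc⟩ := ha
  obtain ⟨e, he⟩ := hb
  have hy0 : y ≠ 0 := ne_of_gt hy
  refine ⟨c ^ (Nat.gcdA a b) * e ^ (Nat.gcdB a b), ?_⟩
  have hc0 : (c : ℝ) ≠ 0 := by rw [← hc]; positivity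
  have he0 : (e : ℝ) ≠ 0 := by rw [← he]; positivity
  have hcq : c ≠ 0 := by exact_mod_cast hc0
  have heq : e ≠ 0 := by exact_mod_cast he0
  have key : (y ^ (Nat.gcd a b : ℤ)) = (c : ℝ) ^ (Nat.gcdA a b) * (e : ℝ) ^ (Nat.gcdB a b) := by
    rw [Nat.gcd_eq_gcd_ab a b, zpow_add₀ hy0, zpow_mul, zpow_mul]
    norm_num
    rw [← hc, ← he]
  rw [← zpow_natCast y, key]
  push_cast [Rat.cast_zpow]
  ring

lemma dvd_of_ratPow {y : ℝ} (hy : 0 < y) {d : ℕ} (hd : 0 < d) (hdr : RatPow y d)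
    (hmin : ∀ e, 0 < e → e < d → ¬ RatPow y e) {f : ℕ} (hf : RatPow y f) : d ∣ f := by
  have hg : RatPow y (Nat.gcd d f) := ratPow_gcd hy hdr hf
  have hgpos : 0 < Nat.gcd d f := Nat.gcd_pos_of_pos_left f hd
  have hgle : Nat.gcd d f ≤ d := Nat.le_of_dvd hd (Nat.gcd_dvd_left d f)
  rcases lt_or_eq_of_le hgle with h | h
  · exact absurd hg (hmin _ hgpos h)
  · rw [← h]; exact Nat.gcd_dvd_right d f

set_option maxHeartbeats 1000000 in
set_option synthInstance.maxHeartbeats 400000 in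
theorem minpoly_radical :
    ∀ (d : ℕ) (y : ℝ) (b : ℚ), 0 < y → y ^ d = (b : ℝ) → 0 < d →
    (∀ e, 0 < e → e < d → ¬ RatPow y e) → minpoly ℚ y = X ^ d - C b := by
  intro d
  induction d using Nat.strong_induction_on with
  | _ d IH =>
  intro y b hy hb hd hmin
  rcases eq_or_lt_of_le (Nat.one_le_iff_ne_zero.mpr hd.ne') with h1 | h2
  · -- d = 1
    subst h1
    rw [pow_one] at hb
    rw [hb, pow_one]
    exact_mod_cast minpoly.eq_X_sub_C ℝ b
  · -- 2 ≤ d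
    set ℓ := d.minFac with hℓ
    have hℓp : ℓ.Prime := Nat.minFac_prime (by omega)
    have hℓdvd : ℓ ∣ d := Nat.minFac_dvd d
    set d' := d / ℓ with hd'
    have hd'mul : d' * ℓ = d := Nat.div_mul_cancel hℓdvd
    have hd'pos : 0 < d' := Nat.div_pos (Nat.minFac_le hd) hℓp.pos
    have hd'lt : d' < d := Nat.div_lt_self hd hℓp.one_lt
    set z := y ^ ℓ with hz
    have hzpos : 0 < z := pow_pos hy ℓ
    have hzd' : z ^ d' = (b : ℝ) := by rw [hz, ← pow_mul, mul_comm, hd'mul, hb]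
    have hzmin : ∀ e, 0 < e → e < d' → ¬ RatPow z e := by
      intro e he hed ⟨c, hc⟩
      exact hmin (ℓ * e) (Nat.mul_pos hℓp.pos he) (by
        calc ℓ * e < ℓ * d' := (Nat.mul_lt_mul_left hℓp.pos).mpr hed
        _ = d := by rw [mul_comm]; exact hd'mul) ⟨c, by rw [pow_mul]; exact hc⟩
    have IHz : minpoly ℚ z = X ^ d' - C b := IH d' hd'lt z b hzpos hzd' hd'pos hzmin
    have hbpos : 0 < b := by
      have : (0:ℝ) < (b:ℝ) := hb ▸ pow_pos hy d
      exact_mod_cast this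
    -- z is integral
    have hzint : IsIntegral ℚ z :=
      ⟨X ^ d' - C b, monic_X_pow_sub_C b hd'pos.ne', by
        simp [eval₂_sub, eval₂_pow, hzd']⟩
    have hyint : IsIntegral ℚ y :=
      ⟨X ^ d - C b, monic_X_pow_sub_C b hd.ne', by simp [eval₂_sub, eval₂_pow, hb]⟩
    -- the norm trick : z is not an ℓ-th power in ℚ⟮z⟯
    have hnotpow : ∀ w : ℚ⟮z⟯, w ^ ℓ ≠ AdjoinSimple.gen ℚ z := by
      intro w hw
      have hnorm : (Algebra.norm ℚ w) ^ ℓ = Algebra.norm ℚ (AdjoinSimple.gen ℚ z) := by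
        rw [← map_pow, hw]
      rw [← adjoin.powerBasis_gen hzint] at hnorm
      replace hnorm := hnorm.trans
        (Algebra.PowerBasis.norm_gen_eq_coeff_zero_minpoly (adjoin.powerBasis hzint))
      rw [adjoin.powerBasis_gen, minpoly_gen, IHz] at hnorm
      have hdim : (adjoin.powerBasis hzint).dim = d' := by
        rw [adjoin.powerBasis_dim, IHz, natDegree_X_pow_sub_C]
      rw [hdim] at hnorm
      have hcoeff : (X ^ d' - C b : ℚ[X]).coeff 0 = -b := by
        simp [coeff_X_pow, hd'pos.ne, hd'pos.ne']
      rw [hcoeff] at hnorm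
      -- |norm w| ^ ℓ = b
      have habs : |Algebra.norm ℚ w| ^ ℓ = b := by
        have := congrArg abs hnorm
        rwa [abs_pow, abs_mul, abs_pow, abs_neg, abs_one, one_pow, one_mul, abs_neg,
          abs_of_pos hbpos] at this
      -- so y ^ d' is rational
      have : y ^ d' = ((|Algebra.norm ℚ w| : ℚ) : ℝ) := by
        have h1 : (y ^ d') ^ ℓ = (((|Algebra.norm ℚ w| : ℚ) : ℝ)) ^ ℓ := by
          rw [← pow_mul, hd'mul, hb, ← Rat.cast_pow, habs]
        have h2 : (0:ℝ) ≤ y ^ d' := le_of_lt (pow_pos hy d')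
        have h3 : (0:ℝ) ≤ ((|Algebra.norm ℚ w| : ℚ) : ℝ) := by push_cast; positivity
        exact (pow_left_inj₀ h2 h3 hℓp.ne_zero).mp h1
      exact hmin d' hd'pos hd'lt ⟨_, this⟩
    have hirr : Irreducible (X ^ ℓ - C (AdjoinSimple.gen ℚ z)) :=
      X_pow_sub_C_irreducible_of_prime hℓp hnotpow
    -- minpoly of y over ℚ⟮z⟯
    have hminF : minpoly ℚ⟮z⟯ y = X ^ ℓ - C (AdjoinSimple.gen ℚ z) := by
      refine (minpoly.eq_of_irreducible_of_monic hirr ?_ (monic_X_pow_sub_C _ hℓp.ne_zero)).symm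
      simp [AdjoinSimple.algebraMap_gen, hz]
    -- degree bookkeeping
    have hyintF : IsIntegral ℚ⟮z⟯ y :=
      ⟨X ^ ℓ - C (AdjoinSimple.gen ℚ z), monic_X_pow_sub_C _ hℓp.ne_zero, by
        simp [eval₂_sub, eval₂_pow, AdjoinSimple.algebraMap_gen, hz]⟩
    have hfinE : Module.finrank ℚ⟮z⟯ ℚ⟮z⟯⟮y⟯ = ℓ := by
      rw [adjoin.finrank hyintF, hminF, natDegree_X_pow_sub_C]
    have hfinF : Module.finrank ℚ ℚ⟮z⟯ = d' := by
      rw [adjoin.finrank hzint, IHz, natDegree_X_pow_sub_C]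
    have hres : ℚ⟮z⟯⟮y⟯.restrictScalars ℚ = ℚ⟮y⟯ := by
      erw [adjoin_simple_adjoin_simple]
      apply le_antisymm
      · rw [adjoin_le_iff]
        intro t ht
        simp only [Set.mem_insert_iff, Set.mem_singleton_iff] at ht
        rcases ht with rfl | rfl
        · exact pow_mem (mem_adjoin_simple_self ℚ y) ℓ
        · exact mem_adjoin_simple_self ℚ _
      · rw [adjoin_le_iff]
        rintro t rfl
        exact subset_adjoin ℚ _ (by simp)
    haveI : FiniteDimensional ℚ ℚ⟮z⟯ := adjoin.finiteDimensional hzint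
    haveI : FiniteDimensional ℚ⟮z⟯ ℚ⟮z⟯⟮y⟯ := adjoin.finiteDimensional hyintF
    have hfinY : Module.finrank ℚ ℚ⟮y⟯ = d := by
      have h1 : Module.finrank ℚ (ℚ⟮z⟯⟮y⟯.restrictScalars ℚ) = Module.finrank ℚ ℚ⟮z⟯⟮y⟯ := rfl
      rw [← hres, h1, ← Module.finrank_mul_finrank ℚ ℚ⟮z⟯ ℚ⟮z⟯⟮y⟯, hfinE, hfinF, hd'mul]
    have hdeg : (minpoly ℚ y).natDegree = d := by
      rw [← adjoin.finrank hyint, hfinY]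
    have hdvd : minpoly ℚ y ∣ X ^ d - C b := by
      apply minpoly.dvd
      simp [hb]
    exact (eq_of_monic_of_associated (minpoly.monic hyint) (monic_X_pow_sub_C b hd.ne')
      (associated_of_dvd_of_natDegree_le hdvd (X_pow_sub_C_ne_zero hd b)
        (by rw [natDegree_X_pow_sub_C, hdeg])))

/-- trace of an irrational radical vanishes -/
theorem trace_radical_eq_zero (K : IntermediateField ℚ ℝ) [FiniteDimensional ℚ K]
    (y : K) (hy : 0 < (y : ℝ)) (N : ℕ) (hN : 0 < N) (hc : RatPow (y : ℝ) N)
    (hirr : ∀ t : ℚ, (y : ℝ) ≠ (t : ℝ)) : Algebra.trace ℚ K y = 0 := by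
  classical
  set yR := (y : ℝ) with hyR
  have hex : ∃ e, 0 < e ∧ RatPow yR e := ⟨N, hN, hc⟩
  have hdpos : 0 < Nat.find hex := (Nat.find_spec hex).1
  obtain ⟨b, hb⟩ := (Nat.find_spec hex).2
  set d := Nat.find hex with hdDef
  have hb' : yR ^ d = (b : ℝ) := hb
  have hmin : ∀ e, 0 < e → e < d → ¬ RatPow yR e := by
    intro e he hed hre
    exact Nat.find_min hex hed ⟨he, hre⟩
  have hminp : minpoly ℚ yR = X ^ d - C b := minpoly_radical d yR b hy hb' hdpos hmin
  have hd1 : d ≠ 1 := by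
    intro h
    rw [h, pow_one] at hb'
    exact hirr b hb'
  have hd2 : 2 ≤ d := by omega
  have hyint : IsIntegral ℚ y := by
    have hR : IsIntegral ℚ yR :=
      ⟨X ^ d - C b, monic_X_pow_sub_C b hdpos.ne', by simp [eval₂_sub, eval₂_pow, hb']⟩
    exact (isIntegral_algebraMap_iff (algebraMap K ℝ).injective).mp (by
      rwa [show algebraMap K ℝ y = yR from rfl])
  have hminpK : minpoly ℚ y = X ^ d - C b := by
    rw [← minpoly.algebraMap_eq (algebraMap K ℝ).injective y,
      show algebraMap K ℝ y = yR from rfl, hminp]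
  have hnext : (X ^ d - C b : ℚ[X]).nextCoeff = 0 := by
    rw [nextCoeff_of_natDegree_pos (by rw [natDegree_X_pow_sub_C]; omega)]
    rw [natDegree_X_pow_sub_C]
    rw [coeff_sub, coeff_X_pow, coeff_C, if_neg (by omega : ¬ (d - 1 = d)), if_neg (by omega : ¬ (d - 1 = 0)), sub_zero]
  rw [trace_eq_trace_adjoin ℚ y, ← adjoin.powerBasis_gen hyint,
    PowerBasis.trace_gen_eq_nextCoeff_minpoly, adjoin.powerBasis_gen, minpoly_gen, hminpK,
    hnext, neg_zero, smul_zero]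

set_option maxHeartbeats 1000000 in
theorem monomials_linearIndependent
    (m : ℕ) (p q : Fin m → ℕ) (hp : ∀ i, (p i).Prime) (hpdist : Function.Injective p)
    (hq : ∀ i, 2 ≤ q i) (r : Fin m → ℝ) (hrpos : ∀ i, 0 < r i)
    (hroot : ∀ i, r i ^ q i = ((p i : ℕ) : ℝ))
    (c : (Π i, Fin (q i)) → ℚ)
    (h : ∑ k : (Π i, Fin (q i)), (c k : ℝ) * ∏ i, r i ^ (k i : ℕ) = 0) :
    ∀ k, c k = 0 := by
  classical
  set N := ∏ i, q i with hN
  have hNq : ∀ i, q i ∣ N := fun i => Finset.dvd_prod_of_mem _ (Finset.mem_univ i)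
  have hNpos : 0 < N := Finset.prod_pos (fun i _ => by have := hq i; omega)
  set M : (Π i, Fin (q i)) → ℝ := fun k => ∏ i, r i ^ (k i : ℕ) with hM
  have hMpos : ∀ k, 0 < M k := fun k => Finset.prod_pos (fun i _ => pow_pos (hrpos i) _)
  set A : (Π i, Fin (q i)) → ℕ := fun k => ∏ i, p i ^ ((k i : ℕ) * (N / q i)) with hA
  have hApos : ∀ k, 0 < A k :=
    fun k => Finset.prod_pos (fun i _ => pow_pos (hp i).pos _)
  have hMN : ∀ k, (M k) ^ N = ((A k : ℕ) : ℝ) := by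
    intro k
    rw [hM, hA]
    push_cast
    rw [← Finset.prod_pow]
    apply Finset.prod_congr rfl
    intro i _
    rw [← pow_mul, ← hroot i, ← pow_mul]
    congr 1
    rw [mul_left_comm, Nat.mul_div_cancel' (hNq i)]
  -- factorization of A
  have hAfact : ∀ (k : (Π i, Fin (q i))) (i : Fin m), (A k).factorization (p i) = (k i : ℕ) * (N / q i) := by
    intro k i
    rw [hA]
    rw [Nat.factorization_prod (fun j _ => (pow_pos (hp j).pos _).ne')]
    rw [Finsupp.finset_sum_apply]
    rw [Finset.sum_eq_single i]
    · rw [Nat.factorization_pow, Finsupp.smul_apply, (hp i).factorization,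
        Finsupp.single_eq_same, smul_eq_mul, mul_one]
    · intro j _ hji
      rw [Nat.factorization_pow, Finsupp.smul_apply, (hp j).factorization,
        Finsupp.single_eq_of_ne' (fun e => hji (hpdist e)), smul_eq_mul, mul_zero]
    · simp
  -- ratios are irrational
  have key : ∀ k k' : (Π i, Fin (q i)), k ≠ k' → ∀ t : ℚ, M k / M k' ≠ (t : ℝ) := by
    intro k k' hkk t ht
    have htpos : 0 < t := by
      have : (0:ℝ) < (t:ℝ) := ht ▸ div_pos (hMpos k) (hMpos k')
      exact_mod_cast this
    have htN : (t : ℝ) ^ N * (A k' : ℝ) = (A k : ℝ) := by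
      rw [← ht, div_pow, hMN, hMN, div_mul_cancel₀]
      exact_mod_cast (hApos k').ne'
    have htQ : t ^ N * (A k' : ℚ) = (A k : ℚ) := by exact_mod_cast htN
    -- clear denominators
    set u := t.num.toNat with hu
    set v := t.den with hv
    have hupos : 0 < u := by
      have := Rat.num_pos.mpr htpos
      omega
    have hvpos : 0 < v := t.pos
    have hnumcast : ((u : ℤ) : ℚ) = (t.num : ℚ) := by
      rw [hu, Int.toNat_of_nonneg (le_of_lt (Rat.num_pos.mpr htpos))]
    have htuv : (t : ℚ) = (u : ℚ) / (v : ℚ) := by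
      rw [← Rat.num_div_den t, hv]
      congr 1
      exact_mod_cast hnumcast.symm
    have hnat : u ^ N * A k' = A k * v ^ N := by
      have : ((u : ℚ) / v) ^ N * (A k' : ℚ) = (A k : ℚ) := by rw [← htuv]; exact htQ
      have hv0 : (v : ℚ) ≠ 0 := by exact_mod_cast hvpos.ne'
      rw [div_pow, div_mul_eq_mul_div, div_eq_iff (pow_ne_zero _ hv0)] at this
      exact_mod_cast this
    obtain ⟨i, hi⟩ := Function.ne_iff.mp hkk
    have hfact := congrArg (fun x => x.factorization (p i)) hnat
    simp only [Nat.factorization_mul (pow_pos hupos N).ne' (hApos k').ne',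
      Nat.factorization_mul (hApos k).ne' (pow_pos hvpos N).ne',
      Nat.factorization_pow, Finsupp.add_apply, Finsupp.smul_apply, smul_eq_mul,
      hAfact] at hfact
    obtain ⟨nq, hnq⟩ : ∃ nq, N / q i = nq := ⟨_, rfl⟩
    rw [hnq] at hfact
    have h3 : 0 < nq := by
      rw [← hnq]
      exact Nat.div_pos (Nat.le_of_dvd hNpos (hNq i)) (by have := hq i; omega)
    have h4 : nq * q i = N := by rw [← hnq]; exact Nat.div_mul_cancel (hNq i)
    have hzi : (((k i : ℕ) : ℤ) - ((k' i : ℕ) : ℤ)) * (nq : ℤ) = 0 := by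
      apply Int.eq_zero_of_abs_lt_dvd (m := (N : ℤ))
      · refine ⟨(u.factorization (p i) : ℤ) - (v.factorization (p i) : ℤ), ?_⟩
        have hfactZ : (N:ℤ) * (u.factorization (p i) : ℤ) + ((k' i : ℕ) : ℤ) * (nq : ℤ)
            = ((k i : ℕ) : ℤ) * (nq : ℤ) + (N:ℤ) * (v.factorization (p i) : ℤ) := by
          exact_mod_cast hfact
        linear_combination -hfactZ
      · have h1 : ((k i : ℕ) : ℤ) < q i := by exact_mod_cast (k i).2
        have h2 : ((k' i : ℕ) : ℤ) < q i := by exact_mod_cast (k' i).2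
        rw [abs_mul]
        have h5 : |((k i : ℕ) : ℤ) - ((k' i : ℕ) : ℤ)| ≤ ((q i : ℤ) - 1) := by
          have h6 : (0:ℤ) ≤ ((k i : ℕ) : ℤ) := by positivity
          have h7 : (0:ℤ) ≤ ((k' i : ℕ) : ℤ) := by positivity
          rw [abs_sub_le_iff]
          omega
        have h8 : |(nq : ℤ)| = (nq : ℤ) := abs_of_pos (by exact_mod_cast h3)
        rw [h8]
        have h9 : ((q i : ℤ) - 1) * nq < N := by
          have : ((nq : ℤ)) * (q i) = N := by exact_mod_cast h4
          nlinarith [h3, this]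
        have h10 : (0:ℤ) ≤ (nq : ℤ) := by positivity
        nlinarith [h5, h9, h10]
    have : (k i : ℕ) = (k' i : ℕ) := by
      rcases mul_eq_zero.mp hzi with h' | h'
      · omega
      · exfalso
        have : (0:ℤ) < (nq : ℤ) := by exact_mod_cast h3
        omega
    exact hi (Fin.ext this)
  -- the trace argument
  intro k₀
  set Y : (Π i, Fin (q i)) → ℝ := fun k => M k / M k₀ with hY
  have hYpos : ∀ k, 0 < Y k := fun k => div_pos (hMpos k) (hMpos k₀)
  have hYrat : ∀ k, RatPow (Y k) N := by
    intro k
    refine ⟨(A k : ℚ) / (A k₀ : ℚ), ?_⟩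
    rw [hY]
    push_cast
    rw [div_pow, hMN, hMN]
  have hYint : ∀ k, IsIntegral ℚ (Y k) := by
    intro k
    obtain ⟨ck, hck⟩ := hYrat k
    exact ⟨X ^ N - C ck, monic_X_pow_sub_C _ hNpos.ne',
      by simp [eval₂_sub, eval₂_pow, hck]⟩
  set S : Set ℝ := Set.range Y with hS
  haveI : Finite S := (Set.finite_range Y).to_subtype
  set K := IntermediateField.adjoin ℚ S with hK
  haveI : FiniteDimensional ℚ K := by
    apply finiteDimensional_adjoin
    rintro x ⟨k, rfl⟩
    exact hYint k
  set YK : (Π i, Fin (q i)) → K := fun k => ⟨Y k, subset_adjoin ℚ S ⟨k, rfl⟩⟩ with hYK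
  have hzero : (∑ k, ((c k : ℚ) : K) * YK k) = 0 := by
    apply (algebraMap K ℝ).injective
    rw [map_sum, map_zero]
    have hterm : ∀ k : (Π i, Fin (q i)), (algebraMap K ℝ) (((c k : ℚ) : K) * YK k) = (c k : ℝ) * Y k := by
      intro k
      rw [map_mul, map_ratCast]
      rfl
    rw [Finset.sum_congr rfl (fun k _ => hterm k)]
    have : ∑ k, (c k : ℝ) * Y k = (∑ k, (c k : ℝ) * M k) / M k₀ := by
      rw [Finset.sum_div]
      exact Finset.sum_congr rfl (fun k _ => (mul_div_assoc _ _ _).symm)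
    rw [this, h, zero_div]
  have htr := congrArg (Algebra.trace ℚ K) hzero
  rw [map_zero] at htr
  have hsmul : ∀ k : (Π i, Fin (q i)), ((c k : ℚ) : K) * YK k = (c k) • YK k := by
    intro k
    rw [Rat.smul_def]
  rw [Finset.sum_congr rfl (fun k _ => hsmul k), map_sum] at htr
  have hterm0 : ∀ k ∈ Finset.univ, k ≠ k₀ →
      (Algebra.trace ℚ K) ((c k) • YK k) = 0 := by
    intro k _ hkk
    rw [LinearMap.map_smul]
    rw [trace_radical_eq_zero K (YK k) (hYpos k) N hNpos (hYrat k)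
      (fun t => key k k₀ hkk t), smul_zero]
  rw [Finset.sum_eq_single_of_mem k₀ (Finset.mem_univ k₀) hterm0] at htr
  have hYK1 : YK k₀ = 1 := by
    apply Subtype.ext
    show Y k₀ = 1
    rw [hY]
    exact div_self (hMpos k₀).ne'
  rw [hYK1, LinearMap.map_smul] at htr
  have h1 : (Algebra.trace ℚ K) 1 = (Module.finrank ℚ K : ℚ) := by
    have h2 := Algebra.trace_algebraMap (R := ℚ) (S := K) 1
    rw [map_one] at h2
    rw [h2]
    simp
  rw [h1, smul_eq_mul] at htr
  have hfr : (Module.finrank ℚ K : ℚ) ≠ 0 := by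
    have : 0 < Module.finrank ℚ K := Module.finrank_pos
    exact_mod_cast this.ne'
  exact (mul_eq_zero.mp htr).resolve_right hfr

end RadicalAux

/-- A single linear equation whose coefficients `a j` and right-hand side `b`
are rational linear combinations of the monomials in the positive real roots
`p i ^ (1 / q i)` (the `p i` distinct primes, `q i ≥ 2`) holds at an integer
point `x` if and only if, for every multi-index `k`, the corresponding rational
equation `∑ j, d k j * x j = db k` holds. -/
theorem irrational_equation_iff_rational_system
    (m n : ℕ) (p q : Fin m → ℕ)
    (hp : ∀ i, (p i).Prime) (hpdist : Function.Injective p)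
    (hq : ∀ i, 2 ≤ q i)
    (r : Fin m → ℝ) (hrpos : ∀ i, 0 < r i)
    (hroot : ∀ i, r i ^ q i = ((p i : ℕ) : ℝ))
    (d : (Π i, Fin (q i)) → Fin n → ℚ) (db : (Π i, Fin (q i)) → ℚ)
    (a : Fin n → ℝ) (b : ℝ)
    (ha : ∀ j, a j = ∑ k : (Π i, Fin (q i)), (d k j : ℝ) * ∏ i, r i ^ (k i : ℕ))
    (hb : b = ∑ k : (Π i, Fin (q i)), (db k : ℝ) * ∏ i, r i ^ (k i : ℕ)) :
    ∀ x : Fin n → ℤ,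
      ((∑ j, a j * (x j : ℝ)) = b ↔
        ∀ k : (Π i, Fin (q i)), (∑ j, d k j * (x j : ℚ)) = db k) := by
  intro x
  set c : (Π i, Fin (q i)) → ℚ := fun k => (∑ j, d k j * (x j : ℚ)) - db k with hc
  have hlin : (∑ j, a j * (x j : ℝ)) - b
      = ∑ k : (Π i, Fin (q i)), (c k : ℝ) * ∏ i, r i ^ (k i : ℕ) := by
    have h1 : ∑ j, a j * (x j : ℝ)
        = ∑ k : (Π i, Fin (q i)), (∑ j, (d k j : ℝ) * (x j : ℝ)) * ∏ i, r i ^ (k i : ℕ) := by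
      simp only [ha, Finset.sum_mul]
      rw [Finset.sum_comm]
      refine Finset.sum_congr rfl (fun k _ => ?_)
      refine Finset.sum_congr rfl (fun j _ => ?_)
      ring
    rw [h1, hb, ← Finset.sum_sub_distrib]
    refine Finset.sum_congr rfl (fun k _ => ?_)
    rw [hc]
    push_cast
    ring
  constructor
  · intro heq
    have h0 : ∑ k : (Π i, Fin (q i)), (c k : ℝ) * ∏ i, r i ^ (k i : ℕ) = 0 := by
      rw [← hlin, heq, sub_self]
    have hall := RadicalAux.monomials_linearIndependent m p q hp hpdist hq r hrpos hroot c h0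
    intro k
    have := hall k
    rw [hc] at this
    exact sub_eq_zero.mp this
  · intro hall
    have hc0 : ∀ k : (Π i, Fin (q i)), c k = 0 := by
      intro k
      rw [hc]
      exact sub_eq_zero.mpr (hall k)
    have : (∑ j, a j * (x j : ℝ)) - b = 0 := by
      rw [hlin]
      refine Finset.sum_eq_zero (fun k _ => ?_)
      rw [hc0 k]
      simp
    linarith [this]
end

section
/- Let p₁, …, p_m be distinct prime numbers and q₁, …, q_m integers with q_i ≥ 2, let A be a real M×n matrix and b a real M-vector every entry of which lies in the subfield of ℝ generated by ℚ and the positive real roots p₁^{1/q₁}, …, p_m^{1/q_m}, and let A′ (rational M′×n matrix) and b′ (rational M′-vector) be such that for every x ∈ ℤ^n with x ≥ 0, Ax = b holds if and only if A′x = b′ holds. Let c ∈ ℚ^n. If the set {x ∈ ℤ^n : x ≥ 0, Ax = b} is nonempty and finite, then the linear-programming value sup{cᵀx : x ∈ ℝ^n, A′x = b′, x ≥ 0} is finite and is greater than or equal to the integer-programming optimal value max{cᵀx : x ∈ ℤ^n, x ≥ 0, Ax = b}. Equivalently, if sup{cᵀx : x ∈ ℝ^n, A′x = b′, x ≥ 0}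 = +∞, then the integer program max{cᵀx : x ∈ ℤ^n, x ≥ 0, Ax = b} is either infeasible or unbounded. -/
open Finset Filter Topology



lemma ratKernelDecomp' {M' n : ℕ} (B : Matrix (Fin M') (Fin n) ℚ) (d : Fin n → ℝ)
    (hd : ∀ i, ∑ j, (B i j : ℝ) * d j = 0) :
    ∃ (k : ℕ) (a : Fin k → ℝ) (v : Fin k → Fin n → ℚ),
      (∀ t i, ∑ j, B i j * v t j = 0) ∧
      (∀ t j, d j = 0 → v t j = 0) ∧
      (∀ j, d j = ∑ t, a t * (v t j : ℝ)) := by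
  set W : Submodule ℚ ℝ := Submodule.span ℚ (Set.range d) with hW
  haveI : FiniteDimensional ℚ W :=
    FiniteDimensional.span_of_finite ℚ (Set.finite_range d)
  set β := Module.finBasis ℚ W with hβ
  set dW : Fin n → W := fun j => ⟨d j, Submodule.subset_span ⟨j, rfl⟩⟩ with hdW
  refine ⟨_, fun t => ((β t : W) : ℝ), fun t j => β.repr (dW j) t, ?_, ?_, ?_⟩
  · intro t i
    have hzero : (∑ j, B i j • dW j) = 0 := by
      apply Subtype.coe_injective
      push_cast [AddSubmonoidClass.coe_finset_sum]
      simpa [Rat.smul_def] using hd i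
    have := congrArg (fun w => β.repr w t) hzero
    simpa [map_sum, map_smul, Finsupp.finset_sum_apply, Finsupp.smul_apply,
      smul_eq_mul] using this
  · intro t j hj
    have : dW j = 0 := by
      apply Subtype.coe_injective; exact hj
    simp [this]
  · intro j
    have := β.sum_repr (dW j)
    have h2 := congrArg (fun w : W => (w : ℝ)) this
    simp only [AddSubmonoidClass.coe_finset_sum, SetLike.val_smul, Rat.smul_def] at h2
    calc d j = ∑ x, ((β.repr (dW j)) x : ℝ) * (β x : ℝ) := h2.symm
    _ = _ := Finset.sum_congr rfl fun t _ => mul_comm _ _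


lemma exists_rat_kernel' {M' n : ℕ} (B : Matrix (Fin M') (Fin n) ℚ) (d : Fin n → ℝ)
    (hpos : ∀ j, 0 ≤ d j) (hker : ∀ i, ∑ j, (B i j : ℝ) * d j = 0)
    (j0 : Fin n) (hj0 : 0 < d j0) :
    ∃ e : Fin n → ℚ, (∀ j, 0 ≤ e j) ∧ (∀ i, ∑ j, B i j * e j = 0) ∧ 0 < e j0 := by
  obtain ⟨k, a, v, hv1, hv2, hv3⟩ := ratKernelDecomp' B d hker
  set C : ℝ := (∑ t, ∑ j, |(v t j : ℝ)|) + 1 with hC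
  have hCpos : 0 < C := by
    have : (0:ℝ) ≤ ∑ t, ∑ j, |(v t j : ℝ)| :=
      Finset.sum_nonneg fun t _ => Finset.sum_nonneg fun j _ => abs_nonneg _
    linarith
  set F : Finset (Fin n) := Finset.univ.filter (fun j => 0 < d j) with hF
  have hFne : F.Nonempty := ⟨j0, by simp [hF, hj0]⟩
  set μ : ℝ := F.inf' hFne d with hμ
  have hμpos : 0 < μ := by
    rw [hμ]
    apply (Finset.lt_inf'_iff _).2
    intro j hj
    exact (Finset.mem_filter.mp hj).2
  set δ : ℝ := μ / C with hδ
  have hδpos : 0 < δ := div_pos hμpos hCpos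
  have happ : ∀ t : Fin k, ∃ q : ℚ, |a t - (q:ℝ)| < δ := fun t => exists_rat_near (a t) hδpos
  choose qa hqa using happ
  have main : ∀ j, 0 < d j → 0 < ∑ t, (qa t : ℝ) * (v t j : ℝ) := by
    intro j h0
    have hdj : μ ≤ d j := by
      apply Finset.inf'_le
      simp [hF, h0]
    have expand : (∑ t, (qa t:ℝ) * (v t j:ℝ)) - d j
        = ∑ t, ((qa t:ℝ) - a t) * (v t j:ℝ) := by
      rw [hv3 j, ← Finset.sum_sub_distrib]
      exact Finset.sum_congr rfl fun t _ => by ring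
    have key : |(∑ t, (qa t : ℝ) * (v t j:ℝ)) - d j| < d j := by
      rw [expand]
      calc |∑ t, ((qa t:ℝ) - a t) * (v t j:ℝ)|
          ≤ ∑ t, |((qa t:ℝ) - a t) * (v t j:ℝ)| := Finset.abs_sum_le_sum_abs _ _
        _ ≤ ∑ t, δ * |(v t j:ℝ)| := by
            apply Finset.sum_le_sum
            intro t _
            rw [abs_mul]
            apply mul_le_mul_of_nonneg_right _ (abs_nonneg _)
            rw [abs_sub_comm]
            exact (hqa t).le
        _ = δ * ∑ t, |(v t j:ℝ)| := by rw [Finset.mul_sum]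
        _ < δ * C := by
            apply mul_lt_mul_of_pos_left _ hδpos
            rw [hC]
            have h1 : ∀ t ∈ Finset.univ, |(v t j:ℝ)| ≤ ∑ j', |(v t j':ℝ)| := by
              intro t _
              exact Finset.single_le_sum (f := fun j' => |(v t j':ℝ)|)
                (fun j' _ => abs_nonneg _) (Finset.mem_univ j)
            have := Finset.sum_le_sum h1
            linarith
        _ = μ * (C / C) := by rw [hδ]; ring
        _ = μ := by rw [div_self hCpos.ne', mul_one]
        _ ≤ d j := hdj
    rcases abs_lt.mp key with ⟨h1, _⟩
    linarith
  refine ⟨fun j => ∑ t, qa t * v t j, ?_, ?_, ?_⟩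
  · intro j
    rcases eq_or_lt_of_le (hpos j) with h0 | h0
    · have : ∀ t, v t j = 0 := fun t => hv2 t j h0.symm
      simp [this]
    · have := main j h0
      have h2 : (0:ℝ) < ((∑ t, qa t * v t j : ℚ) : ℝ) := by push_cast; exact this
      exact_mod_cast h2.le
  · intro i
    calc ∑ j, B i j * ∑ t, qa t * v t j
        = ∑ j, ∑ t, qa t * (B i j * v t j) := by
          refine Finset.sum_congr rfl fun j _ => ?_
          rw [Finset.mul_sum]; exact Finset.sum_congr rfl fun t _ => by ring
      _ = ∑ t, ∑ j, qa t * (B i j * v t j) := Finset.sum_comm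
      _ = ∑ t, qa t * ∑ j, B i j * v t j := by
          refine Finset.sum_congr rfl fun t _ => (Finset.mul_sum _ _ _).symm
      _ = 0 := by simp [hv1]
  · have := main j0 hj0
    have h2 : (0:ℝ) < ((∑ t, qa t * v t j0 : ℚ) : ℝ) := by push_cast; exact this
    exact_mod_cast h2


open Finset

lemma exists_int_scale' {n : ℕ} (e : Fin n → ℚ) :
    ∃ (N : ℕ) (z : Fin n → ℤ), 0 < N ∧ ∀ j, (z j : ℚ) = N * e j := by
  set N : ℕ := ∏ j, (e j).den with hN
  have hNpos : 0 < N := Finset.prod_pos fun j _ => (e j).pos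
  refine ⟨N, fun j => (e j).num * (N / (e j).den : ℕ), hNpos, ?_⟩
  intro j
  have hdvd : (e j).den ∣ N := Finset.dvd_prod_of_mem _ (Finset.mem_univ j)
  have hd0 : ((e j).den : ℚ) ≠ 0 := by exact_mod_cast (e j).den_nz
  have key : ((N / (e j).den : ℕ) : ℚ) = (N:ℚ) / ((e j).den : ℚ) := Nat.cast_div hdvd hd0
  have h2 : (((e j).num * ((N / (e j).den : ℕ) : ℤ) : ℤ) : ℚ)
      = ((e j).num:ℚ) * (((N / (e j).den : ℕ)):ℚ) := by
    rw [Int.cast_mul, Int.cast_natCast]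
  rw [h2, key]
  have h3 : ((e j).num : ℚ) = e j * ((e j).den:ℚ) :=
    ((div_eq_iff hd0).mp (Rat.num_div_den (e j)))
  field_simp
  rw [h3]
  ring


/-- Corollary: let `A' x = b'` be a rational system with the same nonnegative
integer solutions as `A x = b` (whose entries lie in the subfield of `ℝ`
generated by `ℚ` and the positive real roots `p i ^ (1 / q i)`), and let
`c` be a rational cost vector. If the integer program `max cᵀx, Ax = b, x ≥ 0`
has a nonempty finite feasible set, then the LP relaxation value
`sup {cᵀx : A'x = b', x ≥ 0}` is finite and bounds from above the objective
value of every feasible integer solution. -/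
theorem LP_relaxation_of_rational_system_bounds_IP
    (m M M' n : ℕ) (p q : Fin m → ℕ)
    (hp : ∀ i, (p i).Prime) (hpdist : Function.Injective p)
    (hq : ∀ i, 2 ≤ q i)
    (r : Fin m → ℝ) (hrpos : ∀ i, 0 < r i)
    (hroot : ∀ i, r i ^ q i = ((p i : ℕ) : ℝ))
    (A : Matrix (Fin M) (Fin n) ℝ) (b : Fin M → ℝ)
    (hA : ∀ i j, A i j ∈ Subfield.closure (Set.range r))
    (hb : ∀ i, b i ∈ Subfield.closure (Set.range r))
    (A' : Matrix (Fin M') (Fin n) ℚ) (b' : Fin M' → ℚ)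
    (hequiv : ∀ x : Fin n → ℤ, (∀ j, 0 ≤ x j) →
      (A.mulVec (fun j => (x j : ℝ)) = b ↔
        A'.mulVec (fun j => (x j : ℚ)) = b'))
    (c : Fin n → ℚ)
    (ipFeas : Set (Fin n → ℤ))
    (hipFeas : ipFeas =
      {x : Fin n → ℤ | (∀ j, 0 ≤ x j) ∧ A.mulVec (fun j => (x j : ℝ)) = b})
    (hne : ipFeas.Nonempty) (hfin : ipFeas.Finite)
    (lpVals : Set ℝ)
    (hlpVals : lpVals =
      {v : ℝ | ∃ y : Fin n → ℝ, (∀ j, 0 ≤ y j) ∧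
        (∀ i, (∑ j, (A' i j : ℝ) * y j) = (b' i : ℝ)) ∧
        v = ∑ j, (c j : ℝ) * y j}) :
    BddAbove lpVals ∧
      ∀ x ∈ ipFeas, (∑ j, (c j : ℝ) * (x j : ℝ)) ≤ sSup lpVals := by
  subst hipFeas hlpVals
  -- every IP-feasible point yields an LP value
  have hmem : ∀ x : Fin n → ℤ, (∀ j, 0 ≤ x j) → A.mulVec (fun j => (x j : ℝ)) = b →
      (∑ j, (c j : ℝ) * (x j : ℝ)) ∈
        {v : ℝ | ∃ y : Fin n → ℝ, (∀ j, 0 ≤ y j) ∧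
          (∀ i, (∑ j, (A' i j : ℝ) * y j) = (b' i : ℝ)) ∧
          v = ∑ j, (c j : ℝ) * y j} := by
    intro x hx1 hx2
    have hb' := (hequiv x hx1).mp hx2
    refine ⟨fun j => (x j : ℝ), fun j => by
      show (0:ℝ) ≤ (x j : ℝ)
      exact_mod_cast hx1 j, ?_, rfl⟩
    intro i
    have h := congrFun hb' i
    simp only [Matrix.mulVec, dotProduct] at h
    show ∑ j, (A' i j : ℝ) * ((x j : ℤ) : ℝ) = (b' i : ℝ)
    exact_mod_cast h
  have hBdd : BddAbove {v : ℝ | ∃ y : Fin n → ℝ, (∀ j, 0 ≤ y j) ∧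
      (∀ i, (∑ j, (A' i j : ℝ) * y j) = (b' i : ℝ)) ∧
      v = ∑ j, (c j : ℝ) * y j} := by
    by_contra hnb
    rw [not_bddAbove_iff] at hnb
    set C : ℝ := (∑ j, |(c j : ℝ)|) + 1 with hC
    have hCpos : 0 < C := by
      have : (0:ℝ) ≤ ∑ j, |(c j : ℝ)| := Finset.sum_nonneg fun j _ => abs_nonneg _
      linarith
    have hsel : ∀ k : ℕ, ∃ y : Fin n → ℝ, (∀ j, 0 ≤ y j) ∧
        (∀ i, (∑ j, (A' i j : ℝ) * y j) = (b' i : ℝ)) ∧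
        ((k:ℝ)+1)*C < ∑ j, (c j : ℝ) * y j := by
      intro k
      obtain ⟨v, hv, hlt⟩ := hnb (((k:ℝ)+1)*C)
      obtain ⟨y, h1, h2, h3⟩ := hv
      exact ⟨y, h1, h2, h3 ▸ hlt⟩
    choose y hy0 hyf hyv using hsel
    set s : ℕ → ℝ := fun k => ∑ j, y k j with hs
    have hs_lb : ∀ k : ℕ, (k:ℝ)+1 < s k := by
      intro k
      have hvle : ∑ j, (c j:ℝ) * y k j ≤ C * s k := by
        have h1 : ∀ j ∈ Finset.univ, (c j : ℝ) * y k j ≤ C * y k j := by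
          intro j _
          apply mul_le_mul_of_nonneg_right _ (hy0 k j)
          have h2 : |(c j : ℝ)| ≤ ∑ j', |(c j' : ℝ)| :=
            Finset.single_le_sum (f := fun j' => |(c j' : ℝ)|)
              (fun j' _ => abs_nonneg _) (Finset.mem_univ j)
          calc (c j : ℝ) ≤ |(c j : ℝ)| := le_abs_self _
            _ ≤ C := by rw [hC]; linarith
        calc ∑ j, (c j:ℝ) * y k j ≤ ∑ j, C * y k j := Finset.sum_le_sum h1
          _ = C * s k := by rw [hs, Finset.mul_sum]
      have h3 := hyv k
      have h4 : C*((k:ℝ)+1) < C * s k := by linarith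
      exact (mul_lt_mul_iff_right₀ hCpos).mp h4
    have hs_pos : ∀ k, 0 < s k := fun k =>
      lt_of_le_of_lt (by positivity) (hs_lb k)
    set u : ℕ → (Fin n → ℝ) := fun k j => y k j / s k with hu
    set Δ : Set (Fin n → ℝ) := {w | (∀ j, 0 ≤ w j) ∧ ∑ j, w j = 1} with hΔ
    have hΔc : IsCompact Δ := by
      apply Metric.isCompact_of_isClosed_isBounded
      · have h1 : IsClosed {w : Fin n → ℝ | ∀ j, 0 ≤ w j} := by
          have : {w : Fin n → ℝ | ∀ j, 0 ≤ w j} = ⋂ j, {w | 0 ≤ w j} := by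
            ext w; simp
          rw [this]
          exact isClosed_iInter fun j => isClosed_le continuous_const (continuous_apply j)
        have h2 : IsClosed {w : Fin n → ℝ | ∑ j, w j = 1} :=
          isClosed_eq (by continuity) continuous_const
        exact h1.inter h2
      · apply Metric.isBounded_closedBall (x := (0 : Fin n → ℝ)) (r := 1) |>.subset
        intro w hw
        rw [Metric.mem_closedBall, dist_zero_right]
        apply pi_norm_le_iff_of_nonneg zero_le_one |>.2
        intro j
        rw [Real.norm_eq_abs, abs_of_nonneg (hw.1 j)]
        calc w j ≤ ∑ j', w j' := Finset.single_le_sum (fun j' _ => hw.1 j') (Finset.mem_univ j)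
          _ = 1 := hw.2
    have humem : ∀ k, u k ∈ Δ := by
      intro k
      constructor
      · intro j; exact div_nonneg (hy0 k j) (hs_pos k).le
      · rw [hu]
        simp only
        rw [← Finset.sum_div, div_self (hs_pos k).ne']
    obtain ⟨dlim, hdΔ, φ, hφ, hconv⟩ := hΔc.tendsto_subseq humem
    have hstop : Tendsto (fun l => s (φ l)) atTop atTop := by
      apply tendsto_atTop_mono (f := fun l : ℕ => (l : ℝ))
      · intro l
        have h1 : (l : ℝ) ≤ (φ l : ℝ) := by exact_mod_cast hφ.le_apply
        have h2 := hs_lb (φ l)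
        linarith
      · exact tendsto_natCast_atTop_atTop
    have hrow : ∀ i, ∑ j, (A' i j : ℝ) * dlim j = 0 := by
      intro i
      have h1 : Tendsto (fun l => ∑ j, (A' i j : ℝ) * (u (φ l)) j) atTop
          (𝓝 (∑ j, (A' i j : ℝ) * dlim j)) := by
        apply tendsto_finset_sum
        intro j _
        exact Tendsto.const_mul _ (((continuous_apply j).tendsto dlim).comp hconv)
      have h2 : ∀ l, ∑ j, (A' i j : ℝ) * (u (φ l)) j = (b' i : ℝ) / s (φ l) := by
        intro l
        calc ∑ j, (A' i j : ℝ) * (y (φ l) j / s (φ l))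
            = (∑ j, (A' i j : ℝ) * y (φ l) j) / s (φ l) := by
              rw [Finset.sum_div]
              exact Finset.sum_congr rfl fun j _ => (mul_div_assoc _ _ _).symm
          _ = (b' i : ℝ) / s (φ l) := by rw [hyf (φ l) i]
      have h3 : Tendsto (fun l => (b' i : ℝ) / s (φ l)) atTop (𝓝 0) :=
        Tendsto.div_atTop tendsto_const_nhds hstop
      exact tendsto_nhds_unique (h1.congr h2) h3
    have hj0ex : ∃ j0, 0 < dlim j0 := by
      by_contra hno
      push_neg at hno
      have : ∑ j, dlim j = 0 :=
        Finset.sum_eq_zero fun j _ => le_antisymm (hno j) (hdΔ.1 j)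
      rw [hdΔ.2] at this
      norm_num at this
    obtain ⟨j0, hj0⟩ := hj0ex
    obtain ⟨e, he0, heker, hej0⟩ := exists_rat_kernel' A' dlim hdΔ.1 hrow j0 hj0
    obtain ⟨N, z, hNpos, hz⟩ := exists_int_scale' e
    have hz0 : ∀ j, 0 ≤ z j := by
      intro j
      have : (0:ℚ) ≤ (z j : ℚ) := by
        rw [hz j]
        exact mul_nonneg (by positivity) (he0 j)
      exact_mod_cast this
    have hzj0 : 0 < z j0 := by
      have : (0:ℚ) < (z j0 : ℚ) := by
        rw [hz j0]
        have hN' : (0:ℚ) < (N:ℚ) := by exact_mod_cast hNpos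
        exact mul_pos hN' hej0
      exact_mod_cast this
    obtain ⟨x0, hx01, hx02⟩ := hne
    have hx0b' := (hequiv x0 hx01).mp hx02
    -- the family of integer points
    have hker' : ∀ i, ∑ j, A' i j * (z j : ℚ) = 0 := by
      intro i
      have : ∑ j, A' i j * (z j : ℚ) = (N:ℚ) * ∑ j, A' i j * e j := by
        rw [Finset.mul_sum]
        exact Finset.sum_congr rfl fun j _ => by rw [hz j]; ring
      rw [this, heker i, mul_zero]
    have hmem' : ∀ k : ℕ, (fun j => x0 j + (k:ℤ) * z j) ∈
        {x : Fin n → ℤ | (∀ j, 0 ≤ x j) ∧ A.mulVec (fun j => (x j : ℝ)) = b} := by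
      intro k
      have hnn : ∀ j, 0 ≤ x0 j + (k:ℤ) * z j := by
        intro j
        have := mul_nonneg (Int.natCast_nonneg k) (hz0 j)
        linarith [hx01 j]
      refine ⟨hnn, (hequiv _ hnn).mpr ?_⟩
      funext i
      have hrow0 := congrFun hx0b' i
      simp only [Matrix.mulVec, dotProduct] at hrow0 ⊢
      calc ∑ j, A' i j * ((x0 j + (k:ℤ) * z j : ℤ) : ℚ)
          = ∑ j, (A' i j * (x0 j : ℚ) + (k:ℚ) * (A' i j * (z j : ℚ))) := by
            refine Finset.sum_congr rfl fun j _ => ?_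
            push_cast
            ring
        _ = (∑ j, A' i j * (x0 j : ℚ)) + (k:ℚ) * ∑ j, A' i j * (z j : ℚ) := by
            rw [Finset.sum_add_distrib, Finset.mul_sum]
        _ = b' i := by rw [hrow0, hker' i, mul_zero, add_zero]
    have hinj : Function.Injective (fun k : ℕ => (fun j => x0 j + (k:ℤ) * z j)) := by
      intro k1 k2 h
      have := congrFun h j0
      simp only at this
      have h2 : (k1:ℤ) * z j0 = (k2:ℤ) * z j0 := by linarith [this]
      have h3 : (k1:ℤ) = k2 := mul_right_cancel₀ hzj0.ne' h2
      exact_mod_cast h3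
    exact (Set.infinite_of_injective_forall_mem hinj hmem') hfin
  refine ⟨hBdd, ?_⟩
  intro x hx
  exact le_csSup hBdd (hmem x hx.1 hx.2)
end
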